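/- For any positive semidefinite matrices Q₁, Q₂ and any c ∈ [0,1], the Riccati map satisfies ρ(cQ₁ + (1−c)Q₂) ⪰ c·ρ(Q₁) + (1−c)·ρ(Q₂) in the Loewner order, i.e., the Riccati map is concave on the positive semidefinite cone. -/

import Mathlib

open Matrix

noncomputable def riccati {n p : ℕ} (A : Matrix (Fin n) (Fin n) ℝ)
    (C : Matrix (Fin p) (Fin n) ℝ) (Φw : Matrix (Fin n) (Fin n) ℝ)
    (Φv : Matrix (Fin p) (Fin p) ℝ) (Q : Matrix (Fin n) (Fin n) ℝ) :
    Matrix (Fin n) (Fin n) ℝ :=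
  Φw + A * Q * Aᵀ - A * Q * Cᵀ * (C * Q * Cᵀ + Φv)⁻¹ * (C * Q * Aᵀ)

lemma psd_smul' {m : ℕ} {M : Matrix (Fin m) (Fin m) ℝ} (hM : M.PosSemidef) {a : ℝ}
    (ha : 0 ≤ a) : (a • M).PosSemidef := by
  constructor
  · unfold Matrix.IsHermitian
    rw [conjTranspose_smul, hM.1]
    simp
  · intro x
    exact (hM.smul ha).2 x

lemma S_posDef {n p : ℕ} (C : Matrix (Fin p) (Fin n) ℝ) {Φv : Matrix (Fin p) (Fin p) ℝ}
    {Q : Matrix (Fin n) (Fin n) ℝ} (hQ : Q.PosSemidef) (hΦv : Φv.PosDef) :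
    (C * Q * Cᵀ + Φv).PosDef := by
  have h1 : (C * Q * Cᵀ).PosSemidef := by
    have := hQ.mul_mul_conjTranspose_same C
    rwa [conjTranspose_eq_transpose_of_trivial] at this
  exact Matrix.PosDef.posSemidef_add h1 hΦv

lemma riccati_sq {n p : ℕ} (A : Matrix (Fin n) (Fin n) ℝ)
    (C : Matrix (Fin p) (Fin n) ℝ) (Φw : Matrix (Fin n) (Fin n) ℝ)
    (Φv : Matrix (Fin p) (Fin p) ℝ) (hΦv : Φv.PosDef)
    (Q : Matrix (Fin n) (Fin n) ℝ) (hQ : Q.PosSemidef)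
    (K : Matrix (Fin n) (Fin p) ℝ) :
    Φw + A * Q * Aᵀ + K * (C * Q * Cᵀ + Φv) * Kᵀ - K * (C * Q * Aᵀ) - A * Q * Cᵀ * Kᵀ
      - riccati A C Φw Φv Q
    = (K - A * Q * Cᵀ * (C * Q * Cᵀ + Φv)⁻¹) * (C * Q * Cᵀ + Φv)
        * (K - A * Q * Cᵀ * (C * Q * Cᵀ + Φv)⁻¹)ᵀ := by
  set S := C * Q * Cᵀ + Φv with hSdef
  have hS : S.PosDef := S_posDef C hQ hΦv
  have hdet : IsUnit S.det := hS.det_pos.ne'.isUnit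
  have hQsymm : Qᵀ = Q := by
    rw [← conjTranspose_eq_transpose_of_trivial]; exact hQ.1
  have hSsymm : Sᵀ = S := by
    rw [← conjTranspose_eq_transpose_of_trivial]; exact hS.isHermitian
  have hSinv_symm : (S⁻¹)ᵀ = S⁻¹ := by rw [transpose_nonsing_inv, hSsymm]
  have h1 : (K - A * Q * Cᵀ * S⁻¹)ᵀ = Kᵀ - S⁻¹ * (C * Q * Aᵀ) := by
    simp only [transpose_sub, transpose_mul, hSinv_symm, transpose_transpose, hQsymm,
      Matrix.mul_assoc]
  rw [h1]
  have hc1 : S * (S⁻¹ * (C * (Q * Aᵀ))) = C * (Q * Aᵀ) :=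
    Matrix.mul_nonsing_inv_cancel_left S _ hdet
  have hc2 : S⁻¹ * (S * Kᵀ) = Kᵀ := Matrix.nonsing_inv_mul_cancel_left S _ hdet
  have hc3 : S⁻¹ * (S * (S⁻¹ * (C * (Q * Aᵀ)))) = S⁻¹ * (C * (Q * Aᵀ)) :=
    Matrix.nonsing_inv_mul_cancel_left S _ hdet
  unfold riccati
  rw [← hSdef]
  simp only [Matrix.sub_mul, Matrix.mul_sub, Matrix.mul_assoc, hc1, hc2, hc3]
  abel

/-- Concavity of the Riccati map on the positive semidefinite cone. -/
theorem riccati_concave {n p : ℕ} (A : Matrix (Fin n) (Fin n) ℝ)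
    (C : Matrix (Fin p) (Fin n) ℝ) (Φw : Matrix (Fin n) (Fin n) ℝ)
    (Φv : Matrix (Fin p) (Fin p) ℝ) (hΦw : Φw.PosSemidef) (hΦv : Φv.PosDef)
    (Q₁ Q₂ : Matrix (Fin n) (Fin n) ℝ) (hQ₁ : Q₁.PosSemidef) (hQ₂ : Q₂.PosSemidef)
    (c : ℝ) (hc : c ∈ Set.Icc (0 : ℝ) 1) :
    (riccati A C Φw Φv (c • Q₁ + (1 - c) • Q₂)
      - (c • riccati A C Φw Φv Q₁ + (1 - c) • riccati A C Φw Φv Q₂)).PosSemidef := by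
  obtain ⟨hc0, hc1⟩ := hc
  have hc1' : (0 : ℝ) ≤ 1 - c := by linarith
  set Qc := c • Q₁ + (1 - c) • Q₂ with hQc
  have hQcps : Qc.PosSemidef := (psd_smul' hQ₁ hc0).add (psd_smul' hQ₂ hc1')
  set K := A * Qc * Cᵀ * (C * Qc * Cᵀ + Φv)⁻¹ with hK
  have hgc : riccati A C Φw Φv Qc
      = Φw + A * Qc * Aᵀ + K * (C * Qc * Cᵀ + Φv) * Kᵀ - K * (C * Qc * Aᵀ)
        - A * Qc * Cᵀ * Kᵀ := by
    have := riccati_sq A C Φw Φv hΦv Qc hQcps K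
    rw [← hK, sub_self] at this
    simp only [Matrix.zero_mul, Matrix.mul_zero] at this
    linear_combination (norm := abel) -this
  have h1 := riccati_sq A C Φw Φv hΦv Q₁ hQ₁ K
  have h2 := riccati_sq A C Φw Φv hΦv Q₂ hQ₂ K
  set X₁ := (K - A * Q₁ * Cᵀ * (C * Q₁ * Cᵀ + Φv)⁻¹) * (C * Q₁ * Cᵀ + Φv)
      * (K - A * Q₁ * Cᵀ * (C * Q₁ * Cᵀ + Φv)⁻¹)ᵀ with hX1
  set X₂ := (K - A * Q₂ * Cᵀ * (C * Q₂ * Cᵀ + Φv)⁻¹) * (C * Q₂ * Cᵀ + Φv)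
      * (K - A * Q₂ * Cᵀ * (C * Q₂ * Cᵀ + Φv)⁻¹)ᵀ with hX2
  have key : riccati A C Φw Φv Qc
      - (c • riccati A C Φw Φv Q₁ + (1 - c) • riccati A C Φw Φv Q₂)
      = c • X₁ + (1 - c) • X₂ := by
    have e1 : riccati A C Φw Φv Q₁
        = Φw + A * Q₁ * Aᵀ + K * (C * Q₁ * Cᵀ + Φv) * Kᵀ - K * (C * Q₁ * Aᵀ)
          - A * Q₁ * Cᵀ * Kᵀ - X₁ := by
      rw [← h1]; abel
    have e2 : riccati A C Φw Φv Q₂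
        = Φw + A * Q₂ * Aᵀ + K * (C * Q₂ * Cᵀ + Φv) * Kᵀ - K * (C * Q₂ * Aᵀ)
          - A * Q₂ * Cᵀ * Kᵀ - X₂ := by
      rw [← h2]; abel
    rw [hgc, e1, e2, hQc]
    simp only [Matrix.mul_add, Matrix.add_mul, Matrix.mul_smul, Matrix.smul_mul,
      smul_add, smul_sub, smul_smul]
    module
  rw [key]
  have hps1 : X₁.PosSemidef := by
    have := (S_posDef C hQ₁ hΦv).posSemidef.mul_mul_conjTranspose_same
      (K - A * Q₁ * Cᵀ * (C * Q₁ * Cᵀ + Φv)⁻¹)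
    rwa [conjTranspose_eq_transpose_of_trivial] at this
  have hps2 : X₂.PosSemidef := by
    have := (S_posDef C hQ₂ hΦv).posSemidef.mul_mul_conjTranspose_same
      (K - A * Q₂ * Cᵀ * (C * Q₂ * Cᵀ + Φv)⁻¹)
    rwa [conjTranspose_eq_transpose_of_trivial] at this
  exact (psd_smul' hps1 hc0).add (psd_smul' hps2 hc1')
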